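/- Let R be a commutative ring with unity such that for each a, b ∈ R, Ann(a) + Ann(b) = Ann(ab). Then R is reduced, i.e., R has no nonzero nilpotent elements. -/
import Mathlib

/-- If `Ann(a) + Ann(b) = Ann(ab)` for all `a, b`, then `R` is reduced. -/
theorem stmt1 {R : Type*} [CommRing R]
    (h : ∀ a b c : R, c * (a * b) = 0 ↔ ∃ x y : R, x * a = 0 ∧ y * b = 0 ∧ c = x + y) :
    IsReduced R := by
  have k : ∀ a : R, a * a = 0 → a = 0 := by
    intro a ha
    obtain ⟨x, y, hx, hy, hxy⟩ := (h a a 1).mp (by rw [ha, mul_zero])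
    calc a = (x + y) * a := by rw [← hxy, one_mul]
    _ = 0 := by rw [add_mul, hx, hy, add_zero]
  constructor
  intro x hx
  obtain ⟨n, hn⟩ := hx
  induction n with
  | zero =>
    rw [pow_zero] at hn
    rw [← mul_one x, hn, mul_zero]
  | succ m ih =>
    rcases Nat.eq_zero_or_pos m with rfl | hm
    · simpa using hn
    · apply ih
      apply k
      have : x ^ m * x ^ m = x ^ (m + 1) * x ^ (m - 1) := by
        rw [← pow_add, ← pow_add]; congr 1; omega
      rw [this, hn, zero_mul]
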